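/- Let c > 0 and G_c := diag(-1/c², 1, 1, 1). For V ∈ ℝ³ with |V| < c, γ := (1 - |V|²/c²)^{-1/2}, Q ∈ SO(3), define B_c(V) := Id + (γ²/(c²(γ+1))) V Vᵀ and the Lorentz matrix L_c(V,Q) as the 4×4 block matrix with entries L₀₀ = γ, L₀ⱼ = (γ/c²)(VᵀQ)ⱼ, Lᵢ₀ = γ Vᵢ, Lᵢⱼ = (B_c(V)Q)ᵢⱼ. Then L_c(V,Q) · G_c · L_c(V,Q)ᵀ = G_c. -/

import Mathlib

open Matrix

noncomputable def gammaV (c : ℝ) (V : Fin 3 → ℝ) : ℝ :=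
  1 / Real.sqrt (1 - (∑ i, V i ^ 2) / c ^ 2)

noncomputable def Bc (c : ℝ) (V : Fin 3 → ℝ) : Matrix (Fin 3) (Fin 3) ℝ :=
  1 + (gammaV c V ^ 2 / (c ^ 2 * (gammaV c V + 1))) • vecMulVec V V

noncomputable def Lc (c : ℝ) (V : Fin 3 → ℝ) (Q : Matrix (Fin 3) (Fin 3) ℝ) :
    Matrix (Fin 1 ⊕ Fin 3) (Fin 1 ⊕ Fin 3) ℝ :=
  fromBlocks (of fun _ _ => gammaV c V)
             (of fun _ j => (gammaV c V / c ^ 2) * (V ᵥ* Q) j)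
             (of fun i _ => gammaV c V * V i)
             (Bc c V * Q)

noncomputable def Gc (c : ℝ) : Matrix (Fin 1 ⊕ Fin 3) (Fin 1 ⊕ Fin 3) ℝ :=
  fromBlocks (of fun _ _ => -1 / c ^ 2) 0 0 1

theorem stmt5 (c : ℝ) (hc : 0 < c) (V : Fin 3 → ℝ)
    (hV : Real.sqrt (∑ i, V i ^ 2) < c)
    (Q : Matrix (Fin 3) (Fin 3) ℝ) (hQ : Qᵀ * Q = 1) (hdetQ : Q.det = 1) :
    Lc c V Q * Gc c * (Lc c V Q)ᵀ = Gc c := by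
  have hc0 : c ≠ 0 := hc.ne'
  set s : ℝ := ∑ i, V i ^ 2 with hs
  have hs0 : 0 ≤ s := Finset.sum_nonneg fun i _ => sq_nonneg _
  have hslt : s < c ^ 2 := by
    have h := pow_lt_pow_left₀ hV (Real.sqrt_nonneg _) (n := 2) two_ne_zero
    rwa [Real.sq_sqrt hs0] at h
  set γ : ℝ := gammaV c V with hγdef
  have hx : (0:ℝ) < 1 - s / c ^ 2 := by
    have : s / c ^ 2 < 1 := (div_lt_one (by positivity)).mpr hslt
    linarith
  have hγpos : 0 < γ := by
    rw [hγdef, gammaV, ← hs]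
    positivity
  have hγ1 : γ ^ 2 * (1 - s / c ^ 2) = 1 := by
    rw [hγdef, gammaV, ← hs, div_pow, one_pow, Real.sq_sqrt hx.le]
    exact one_div_mul_cancel hx.ne' 
  have hγne : γ + 1 ≠ 0 := by positivity
  set k : ℝ := γ ^ 2 / (c ^ 2 * (γ + 1)) with hk
  have h2 : γ ^ 2 * s = (γ ^ 2 - 1) * c ^ 2 := by
    have h := hγ1
    field_simp at h
    linear_combination -h
  have hks : k * s = γ - 1 := by
    rw [hk]
    field_simp
    linear_combination h2
  have hkc : k * (γ + 1) = γ ^ 2 / c ^ 2 := by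
    rw [hk]
    field_simp
  have h2k : 2 * k + k ^ 2 * s = γ ^ 2 / c ^ 2 := by
    linear_combination k * hks + hkc
  -- matrices
  set R : Matrix (Fin 1) (Fin 3) ℝ := of fun _ j => V j with hR
  have hones : ∀ a : ℝ, (of fun _ _ => a : Matrix (Fin 1) (Fin 1) ℝ) = a • 1 := by
    intro a; ext i j
    fin_cases i; fin_cases j; simp
  have hQQT : Q * Qᵀ = 1 := mul_eq_one_comm.mp hQ
  have hRRT : R * Rᵀ = s • (1 : Matrix (Fin 1) (Fin 1) ℝ) := by
    ext i j; fin_cases i; fin_cases j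
    simp [hR, mul_apply, hs, sq]
  have hRvV : R * vecMulVec V V = s • R := by
    ext i j
    simp only [hR, mul_apply, vecMulVec_apply, of_apply, Matrix.smul_apply, smul_eq_mul, hs]
    rw [Finset.sum_mul]
    exact Finset.sum_congr rfl fun x _ => by ring
  have hvVR : vecMulVec V V * Rᵀ = s • Rᵀ := by
    ext i j
    simp only [hR, mul_apply, vecMulVec_apply, transpose_apply, of_apply, Matrix.smul_apply,
      smul_eq_mul, hs]
    rw [Finset.sum_mul]
    exact Finset.sum_congr rfl fun x _ => by ring
  have hRTR : Rᵀ * R = vecMulVec V V := by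
    ext i j
    simp [hR, mul_apply, vecMulVec_apply]
  have hvv : vecMulVec V V * vecMulVec V V = s • vecMulVec V V := by
    ext i j
    simp only [mul_apply, vecMulVec_apply, Matrix.smul_apply, smul_eq_mul, hs]
    rw [Finset.sum_mul]
    exact Finset.sum_congr rfl fun x _ => by ring
  have hvvT : (vecMulVec V V)ᵀ = vecMulVec V V := by
    ext i j
    simp [vecMulVec_apply, mul_comm]
  have hBsym : (Bc c V)ᵀ = Bc c V := by
    rw [Bc, transpose_add, transpose_smul, transpose_one, hvvT]
  have hBB : Bc c V * Bc c V = 1 + (2 * k + k ^ 2 * s) • vecMulVec V V := by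
    rw [Bc, ← hγdef, ← hk]
    simp only [Matrix.add_mul, Matrix.mul_add, Matrix.one_mul, Matrix.mul_one, Matrix.smul_mul,
      Matrix.mul_smul, smul_smul, hvv]
    module
  have hRB : R * Bc c V = γ • R := by
    rw [Bc, ← hγdef, ← hk]
    simp only [Matrix.mul_add, Matrix.mul_one, Matrix.mul_smul, hRvV, smul_smul, hks]
    module
  have hBR : Bc c V * Rᵀ = γ • Rᵀ := by
    rw [Bc, ← hγdef, ← hk]
    simp only [Matrix.add_mul, Matrix.one_mul, Matrix.smul_mul, hvVR, smul_smul, hks]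
    module
  have hLc : Lc c V Q = fromBlocks (γ • 1) ((γ / c ^ 2) • (R * Q)) (γ • Rᵀ) (Bc c V * Q) := by
    rw [Lc, ← hγdef, fromBlocks_inj]
    refine ⟨hones γ, ?_, ?_, rfl⟩
    · ext i j
      simp [hR, mul_apply, vecMul, dotProduct, Finset.mul_sum]
    · ext i j; simp [hR, mul_comm]
  have hGc : Gc c = fromBlocks ((-1 / c ^ 2) • 1) 0 0 1 := by
    rw [Gc, hones]
  rw [hLc, hGc, fromBlocks_transpose, fromBlocks_multiply, fromBlocks_multiply]
  have e1 : (γ • (1 : Matrix (Fin 1) (Fin 1) ℝ))ᵀ = γ • 1 := by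
    rw [transpose_smul, transpose_one]
  have e2 : ((γ / c ^ 2) • (R * Q))ᵀ = (γ / c ^ 2) • (Qᵀ * Rᵀ) := by
    rw [transpose_smul, transpose_mul]
  have e3 : (γ • Rᵀ)ᵀ = γ • R := by rw [transpose_smul, transpose_transpose]
  have e4 : (Bc c V * Q)ᵀ = Qᵀ * Bc c V := by rw [transpose_mul, hBsym]
  rw [e1, e2, e3, e4]
  have hRQQR : R * Q * (Qᵀ * Rᵀ) = s • (1 : Matrix (Fin 1) (Fin 1) ℝ) := by
    rw [Matrix.mul_assoc, ← Matrix.mul_assoc Q, hQQT, Matrix.one_mul, hRRT]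
  have hRQQB : R * Q * (Qᵀ * Bc c V) = γ • R := by
    rw [Matrix.mul_assoc, ← Matrix.mul_assoc Q, hQQT, Matrix.one_mul, hRB]
  have hBQQR : Bc c V * Q * (Qᵀ * Rᵀ) = γ • Rᵀ := by
    rw [Matrix.mul_assoc, ← Matrix.mul_assoc Q, hQQT, Matrix.one_mul, hBR]
  have hBQQB : Bc c V * Q * (Qᵀ * Bc c V) = 1 + (2 * k + k ^ 2 * s) • vecMulVec V V := by
    rw [Matrix.mul_assoc, ← Matrix.mul_assoc Q, hQQT, Matrix.one_mul]
    exact hBB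
  rw [fromBlocks_inj]
  refine ⟨?_, ?_, ?_, ?_⟩
  · simp only [Matrix.mul_zero, Matrix.zero_mul, add_zero, zero_add, Matrix.smul_mul,
      Matrix.mul_smul, Matrix.one_mul, Matrix.mul_one, hRQQR, smul_smul]
    match_scalars
    field_simp
    linear_combination h2
  · simp only [Matrix.mul_zero, Matrix.zero_mul, add_zero, zero_add, Matrix.smul_mul,
      Matrix.mul_smul, Matrix.one_mul, Matrix.mul_one, hRQQB, smul_smul]
    match_scalars
    field_simp
    ring
  · simp only [Matrix.mul_zero, Matrix.zero_mul, add_zero, zero_add, Matrix.smul_mul,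
      Matrix.mul_smul, Matrix.one_mul, Matrix.mul_one, hBQQR, smul_smul]
    match_scalars
    field_simp
    ring
  · simp only [Matrix.mul_zero, Matrix.zero_mul, add_zero, zero_add, Matrix.smul_mul,
      Matrix.mul_smul, Matrix.one_mul, Matrix.mul_one, hBQQB, hRTR, smul_smul]
    rw [h2k]
    match_scalars
    · field_simp
      ring
    · norm_num
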